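/- If (k1,k2,q1,q2) is an integer quadruple with k1 > 0, k2 > 0, 0 ≤ q1 < k1, 0 ≤ q2 < k2, k1·k2 − k1·q2 − k2·q1 = 1, and k1 ≠ k2, then min(k1, k2) ≤ q1 + q2. -/
import Mathlib

theorem stmt6 (k1 k2 q1 q2 : ℤ) (hk1 : 0 < k1) (hk2 : 0 < k2)
    (hq1 : 0 ≤ q1) (hq1' : q1 < k1) (hq2 : 0 ≤ q2) (hq2' : q2 < k2)
    (heq : k1 * k2 - k1 * q2 - k2 * q1 = 1) (hkk : k1 ≠ k2) :
    min k1 k2 ≤ q1 + q2 := by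
  by_contra h
  push_neg at h
  have h1 : q1 + q2 < k1 := lt_of_lt_of_le h (min_le_left _ _)
  have h2 : q1 + q2 < k2 := lt_of_lt_of_le h (min_le_right _ _)
  have hne : 1 ≤ (k1 - k2)^2 := by
    have h0 : k1 - k2 ≠ 0 := sub_ne_zero.mpr hkk
    have := Int.one_le_abs h0
    nlinarith [sq_abs (k1 - k2)]
  have key : (q2 + 1) * (q1 + 1) ≤ (k1 - q1) * (k2 - q2) :=
    mul_le_mul (by linarith) (by linarith) (by linarith) (by linarith)
  have hs : q1 = 0 ∧ q2 = 0 := by constructor <;> nlinarith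
  obtain ⟨h10, h20⟩ := hs
  subst h10; subst h20
  nlinarith [mul_nonneg (by linarith : (0:ℤ) ≤ k1 - 1) (by linarith : (0:ℤ) ≤ k2 - 1)]
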